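/- Let $q < 0$ and let $h : [r_0, r_1] \to \mathbb{R}$ be a $C^1$ function with $0 < r_0 < r_1$. If $r_0^{q} |h(r_0)|^2 \leq D_0$, then $-\frac{2}{q} r_1^{q} |h(r_1)|^2 + \int_{r_0}^{r_1} r^{q-1} |h(r)|^2 \, dr \leq \frac{4}{q^2} \int_{r_0}^{r_1} r^{q+1} |h'(r)|^2 \, dr - \frac{2}{q} D_0$. -/

import Mathlib

/-- Hardy inequality on an interval, boundary term at the left endpoint (Lemma 3.1 i). -/
theorem hardy_inequality_left (q r0 r1 D0 : ℝ) (h h' : ℝ → ℝ)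
    (hq : q < 0) (hr0 : 0 < r0) (hr01 : r0 < r1)
    (hderiv : ∀ r ∈ Set.Icc r0 r1, HasDerivAt h (h' r) r)
    (hcont : ContinuousOn h' (Set.Icc r0 r1))
    (hD0 : r0 ^ q * |h r0| ^ 2 ≤ D0) :
    -(2 / q) * (r1 ^ q * |h r1| ^ 2) + ∫ r in r0..r1, r ^ (q - 1) * |h r| ^ 2
      ≤ (4 / q ^ 2) * (∫ r in r0..r1, r ^ (q + 1) * |h' r| ^ 2) - (2 / q) * D0 := by
  have hle : r0 ≤ r1 := hr01.le
  have hpos : ∀ r ∈ Set.Icc r0 r1, 0 < r := fun r hr => lt_of_lt_of_le hr0 hr.1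
  have hcontH : ContinuousOn h (Set.Icc r0 r1) :=
    fun r hr => (hderiv r hr).continuousAt.continuousWithinAt
  set G' : ℝ → ℝ := fun r => q * r ^ (q - 1) * (h r) ^ 2 + r ^ q * (2 * h r * h' r) with hG'def
  have hderivG : ∀ r ∈ Set.Icc r0 r1, HasDerivAt (fun r => r ^ q * (h r) ^ 2) (G' r) r := by
    intro r hr
    have h1 : HasDerivAt (fun x : ℝ => x ^ q) (q * r ^ (q - 1)) r :=
      Real.hasDerivAt_rpow_const (Or.inl (hpos r hr).ne')
    have h2 : HasDerivAt (fun x => (h x) ^ 2) (2 * h r * h' r) r := by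
      have := (hderiv r hr).fun_pow 2
      simpa [mul_comm, mul_assoc] using this
    simpa [hG'def] using h1.fun_mul h2
  have hrpowCont : ∀ p : ℝ, ContinuousOn (fun r : ℝ => r ^ p) (Set.Icc r0 r1) := by
    intro p
    exact continuousOn_id.rpow_const (fun r hr => Or.inl (hpos r hr).ne')
  have hcontG' : ContinuousOn G' (Set.Icc r0 r1) := by
    apply ContinuousOn.add
    · exact ((continuousOn_const.mul (hrpowCont (q - 1))).mul (hcontH.pow 2))
    · exact (hrpowCont q).mul ((continuousOn_const.mul hcontH).mul hcont)
  have hintG' : IntervalIntegrable G' MeasureTheory.volume r0 r1 :=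
    hcontG'.intervalIntegrable_of_Icc hle
  have hFTC : ∫ r in r0..r1, G' r = r1 ^ q * (h r1) ^ 2 - r0 ^ q * (h r0) ^ 2 := by
    apply intervalIntegral.integral_eq_sub_of_hasDerivAt
    · intro r hr
      exact hderivG r (by rwa [Set.uIcc_of_le hle] at hr)
    · exact hintG'
  -- the comparison function
  set Φ : ℝ → ℝ := fun r => -(r ^ (q - 1) * (h r) ^ 2) + (4 / q ^ 2) * (r ^ (q + 1) * (h' r) ^ 2)
    with hΦdef
  have hintΦ : IntervalIntegrable Φ MeasureTheory.volume r0 r1 := by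
    apply ContinuousOn.intervalIntegrable_of_Icc hle
    apply ContinuousOn.add
    · exact ((hrpowCont (q - 1)).mul (hcontH.pow 2)).neg
    · exact continuousOn_const.mul ((hrpowCont (q + 1)).mul (hcont.pow 2))
  have hpt : ∀ r ∈ Set.Icc r0 r1, -(2 / q) * G' r ≤ Φ r := by
    intro r hr
    have hrpos := hpos r hr
    have hc : (0:ℝ) < r ^ q := Real.rpow_pos_of_pos hrpos _
    have hu' : r ^ (q - 1) = r ^ q / r := by
      rw [Real.rpow_sub hrpos, Real.rpow_one]
    have hv' : r ^ (q + 1) = r ^ q * r := by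
      rw [Real.rpow_add hrpos, Real.rpow_one]
    have hq2 : q ≠ 0 := hq.ne
    have key : Φ r - (-(2 / q)) * G' r = (r ^ q / r) * (h r + (2 / q) * r * h' r) ^ 2 := by
      simp only [hG'def, hΦdef]
      rw [hu', hv']
      field_simp
      ring
    nlinarith [key, mul_nonneg (div_pos hc hrpos).le (sq_nonneg (h r + (2 / q) * r * h' r))]
  have hmono : ∫ r in r0..r1, -(2 / q) * G' r ≤ ∫ r in r0..r1, Φ r :=
    intervalIntegral.integral_mono_on hle (hintG'.const_mul _) hintΦ hpt
  rw [intervalIntegral.integral_const_mul, hFTC, hΦdef] at hmono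
  have hsplit : ∫ r in r0..r1, (-(r ^ (q - 1) * (h r) ^ 2) + (4 / q ^ 2) * (r ^ (q + 1) * (h' r) ^ 2))
      = -(∫ r in r0..r1, r ^ (q - 1) * (h r) ^ 2) + (4 / q ^ 2) * ∫ r in r0..r1, r ^ (q + 1) * (h' r) ^ 2 := by
    rw [intervalIntegral.integral_add, intervalIntegral.integral_neg, intervalIntegral.integral_const_mul]
    · exact (((hrpowCont (q - 1)).mul (hcontH.pow 2)).intervalIntegrable_of_Icc hle).neg
    · exact (continuousOn_const.mul ((hrpowCont (q + 1)).mul (hcont.pow 2))).intervalIntegrable_of_Icc hle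
  rw [hsplit] at hmono
  have hqneg : 2 / q < 0 := div_neg_of_pos_of_neg two_pos hq
  have hD0' : (2 / q) * D0 ≤ (2 / q) * (r0 ^ q * (h r0) ^ 2) := by
    have h2 : r0 ^ q * (h r0) ^ 2 ≤ D0 := by rwa [sq_abs] at hD0
    exact mul_le_mul_of_nonpos_left h2 hqneg.le
  simp only [sq_abs]
  nlinarith [hmono, hD0']
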